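/- Let X be a Banach space, Y a Banach space, and T : c₀(X) → Y a bounded linear operator of norm 1. Suppose y₀* ∈ S_{Y*}, x₀ ∈ S_{c₀(X)}, and 0 < η < 1 satisfy y₀*(T x₀) = ‖T x₀‖ > 1 − η. Then for every 0 < η' < 1, the set A := { i ∈ ℕ : Re [(T* y₀*)(i)](x₀(i)) > (1 − η') ‖(T* y₀*)(i)‖ } satisfies ∑_{i ∈ A} ‖(T* y₀*)(i)‖ > 1 − η/η'. -/

import Mathlib

open scoped ZeroAtInfty

/-- Lemma 2.4 (first part).  Here `g i = (T* y₀*)(i)` is the sequence in `X*`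
representing the functional `T* y₀*` under the identification `(c₀(X))* = ℓ₁(X*)`. -/
theorem lemma_convex_series_estimate2_first
    (X Y : Type*) [NormedAddCommGroup X] [NormedSpace ℂ X] [CompleteSpace X]
    [NormedAddCommGroup Y] [NormedSpace ℂ Y] [CompleteSpace Y]
    (T : C₀(ℕ, X) →L[ℂ] Y) (hT : ‖T‖ = 1)
    (y₀ : Y →L[ℂ] ℂ) (hy₀ : ‖y₀‖ = 1)
    (x₀ : C₀(ℕ, X)) (hx₀ : ‖x₀‖ = 1)
    (g : ℕ → (X →L[ℂ] ℂ))
    (hg_sum : Summable fun i => ‖g i‖)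
    (hg_le : ∑' i, ‖g i‖ ≤ ‖T‖)
    (hg_repr : ∀ x : C₀(ℕ, X), y₀ (T x) = ∑' i, g i (x i))
    (η : ℝ) (hη0 : 0 < η) (hη1 : η < 1)
    (heq : y₀ (T x₀) = (‖T x₀‖ : ℂ)) (hbig : ‖T x₀‖ > 1 - η)
    (η' : ℝ) (hη'0 : 0 < η') (hη'1 : η' < 1) :
    ∑' i, Set.indicator
        {i : ℕ | ((g i) (x₀ i)).re > (1 - η') * ‖g i‖}
        (fun i => ‖g i‖) i > 1 - η / η' := by
  set A : Set ℕ := {i : ℕ | ((g i) (x₀ i)).re > (1 - η') * ‖g i‖} with hA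
  -- pointwise bounds
  have hx₀i : ∀ i, ‖x₀ i‖ ≤ 1 := by
    intro i
    have : ‖x₀.toBCF i‖ ≤ ‖x₀.toBCF‖ := x₀.toBCF.norm_coe_le_norm i
    rwa [ZeroAtInftyContinuousMap.norm_toBCF_eq_norm, hx₀] at this
  have hptnorm : ∀ i, ‖g i (x₀ i)‖ ≤ ‖g i‖ := by
    intro i
    calc ‖g i (x₀ i)‖ ≤ ‖g i‖ * ‖x₀ i‖ := (g i).le_opNorm _
    _ ≤ ‖g i‖ * 1 := by
        exact mul_le_mul_of_nonneg_left (hx₀i i) (norm_nonneg _)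
    _ = ‖g i‖ := mul_one _
  have hre_le : ∀ i, (g i (x₀ i)).re ≤ ‖g i‖ := fun i =>
    (Complex.re_le_norm _).trans (hptnorm i)
  -- summability
  have hsum_pt : Summable fun i => g i (x₀ i) :=
    Summable.of_norm (hg_sum.of_nonneg_of_le (fun i => norm_nonneg _) hptnorm)
  have hsum_re : Summable fun i => (g i (x₀ i)).re := (Complex.hasSum_re hsum_pt.hasSum).summable
  have hsumA : Summable (A.indicator fun i => ‖g i‖) := hg_sum.indicator A
  have hsumAc : Summable (Aᶜ.indicator fun i => ‖g i‖) := hg_sum.indicator Aᶜ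
  set a := ∑' i, A.indicator (fun i => ‖g i‖) i with ha
  set b := ∑' i, Aᶜ.indicator (fun i => ‖g i‖) i with hb
  -- Re of the representation
  have hre_sum : (∑' i, g i (x₀ i)).re = ∑' i, (g i (x₀ i)).re :=
    (Complex.hasSum_re hsum_pt.hasSum).tsum_eq.symm
  have h1 : 1 - η < ∑' i, (g i (x₀ i)).re := by
    have := hg_repr x₀
    have hre : ‖T x₀‖ = ∑' i, (g i (x₀ i)).re := by
      rw [← hre_sum, ← this, heq, Complex.ofReal_re]
    linarith [hbig.trans_eq hre]
  -- bound the real sum by a + (1-η') b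
  have h2 : ∑' i, (g i (x₀ i)).re ≤ a + (1 - η') * b := by
    rw [ha, hb, ← tsum_mul_left, ← Summable.tsum_add hsumA (hsumAc.mul_left _)]
    refine Summable.tsum_le_tsum (fun i => ?_) hsum_re (hsumA.add (hsumAc.mul_left _))
    by_cases hi : i ∈ A
    · rw [Set.indicator_of_mem hi, Set.indicator_of_notMem (by simpa using hi)]
      simpa using hre_le i
    · rw [Set.indicator_of_notMem hi, Set.indicator_of_mem (by simpa using hi)]
      have : ¬ ((g i) (x₀ i)).re > (1 - η') * ‖g i‖ := hi
      push_neg at this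
      simpa using this
  -- a + b ≤ 1
  have h3 : a + b ≤ 1 := by
    have : a + b = ∑' i, ‖g i‖ := by
      rw [ha, hb, ← Summable.tsum_add hsumA hsumAc]
      exact tsum_congr fun i => by
        simpa using congrFun (Set.indicator_self_add_compl A fun i => ‖g i‖) i
    rw [this]; rw [hT] at hg_le; exact hg_le
  have hbnn : 0 ≤ b :=
    tsum_nonneg fun i => Set.indicator_nonneg (fun j _ => norm_nonneg _) i
  -- conclude
  have key : η' * a > η' - η := by nlinarith [h1, h2, h3, hbnn]
  have key2 : (η' - η) / η' < a := by
    rw [div_lt_iff₀ hη'0]; nlinarith [key]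
  have heqd : (η' - η) / η' = 1 - η / η' := by field_simp
  linarith [key2, heqd.symm.trans_lt key2]
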